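/- Strong local minimality transfers from the original cost to the FBE (Theorem 2 direction): let 0 < γ < 1/L, let u⋆ ∈ E be a critical point with u⋆ ∈ T_γ(u⋆), and suppose there is a function T : E → E with T(u) ∈ T_γ(u) for all u, T(u⋆) = u⋆, which is Lipschitz continuous at u⋆, i.e., there exist κ ≥ 0 and δ > 0 such that ‖T(u) − u⋆‖ ≤ κ‖u − u⋆‖ whenever ‖u − u⋆‖ < δ. If u⋆ is a strong local minimum of φ (there exist c > 0 and ρ > 0 with φ(u) ≥ φ(u⋆) + c‖u − u⋆‖² for all ‖u − u⋆‖ < ρ), then u⋆ is a strong local minimum of φ_γ (there exist c' > 0 and ρ' > 0 with φ_γ(u) ≥ φ_γ(u⋆) + c'‖u − u⋆‖² for all ‖u − u⋆‖ < ρ'). -/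

import Mathlib

open scoped RealInnerProductSpace
open Filter Topology Asymptotics

/-- Moreau envelope `g^γ(v) = inf_w { g(w) + (1/(2γ))‖w − v‖² }` of an
extended-real-valued function `g`. -/
noncomputable def moreauEnv {E : Type*} [NormedAddCommGroup E] [InnerProductSpace ℝ E]
    (g : E → EReal) (γ : ℝ) (v : E) : EReal :=
  ⨅ w : E, g w + (((1 / (2 * γ)) * ‖w - v‖ ^ 2 : ℝ) : EReal)

/-- The (set-valued) proximal mapping
`prox_{γg}(v) = argmin_w { g(w) + (1/(2γ))‖w − v‖² }`. -/
def proxSet {E : Type*} [NormedAddCommGroup E] [InnerProductSpace ℝ E]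
    (g : E → EReal) (γ : ℝ) (v : E) : Set E :=
  {w | ∀ w' : E, g w + (((1 / (2 * γ)) * ‖w - v‖ ^ 2 : ℝ) : EReal)
      ≤ g w' + (((1 / (2 * γ)) * ‖w' - v‖ ^ 2 : ℝ) : EReal)}

/-- The forward–backward envelope
`φ_γ(u) = ℓ(u) − (γ/2)‖∇ℓ(u)‖² + g^γ(u − γ∇ℓ(u))`, where `l'` plays the role
of the gradient `∇ℓ`. -/
noncomputable def fbe {E : Type*} [NormedAddCommGroup E] [InnerProductSpace ℝ E]
    (l : E → ℝ) (l' : E → E) (g : E → EReal) (γ : ℝ) (u : E) : EReal :=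
  ((l u - (γ / 2) * ‖l' u‖ ^ 2 : ℝ) : EReal) + moreauEnv g γ (u - γ • l' u)

/-- Descent lemma. -/
lemma descent_lemma {E : Type*} [NormedAddCommGroup E] [InnerProductSpace ℝ E] [CompleteSpace E]
    (l : E → ℝ) (l' : E → E) (L : ℝ)
    (hgrad : ∀ x : E, HasGradientAt l (l' x) x)
    (hlip : ∀ x y : E, ‖l' x - l' y‖ ≤ L * ‖x - y‖)
    (x y : E) :
    l y ≤ l x + ⟪l' x, y - x⟫ + L / 2 * ‖y - x‖ ^ 2 := by
  set d := y - x with hd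
  have hline : ∀ t : ℝ, HasDerivAt (fun t : ℝ => l (x + t • d)) ⟪l' (x + t • d), d⟫ t := by
    intro t
    have h1 : HasDerivAt (fun t : ℝ => x + t • d) d t := by
      simpa using (HasDerivAt.smul_const (hasDerivAt_id t) d).const_add x
    have h2 := (hgrad (x + t • d)).hasFDerivAt.comp_hasDerivAt t h1
    simp [InnerProductSpace.toDual_apply_apply] at h2; exact h2
  -- f(t) := l x + t ⟪l' x, d⟫ + L/2 t² ‖d‖² − l (x + t•d) is monotone on [0,1]
  set f : ℝ → ℝ := fun t => l x + t * ⟪l' x, d⟫ + L / 2 * t ^ 2 * ‖d‖ ^ 2 - l (x + t • d)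
    with hf
  have hderiv : ∀ t : ℝ, HasDerivAt f (⟪l' x, d⟫ + L * t * ‖d‖ ^ 2 - ⟪l' (x + t • d), d⟫) t := by
    intro t
    have h1 : HasDerivAt (fun t : ℝ => l x + t * ⟪l' x, d⟫ + L / 2 * t ^ 2 * ‖d‖ ^ 2)
        (⟪l' x, d⟫ + L * t * ‖d‖ ^ 2) t := by
      have := ((hasDerivAt_id t).mul_const ⟪l' x, d⟫).const_add (l x)
      have h2 : HasDerivAt (fun t : ℝ => L / 2 * t ^ 2 * ‖d‖ ^ 2) (L * t * ‖d‖ ^ 2) t := by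
        have := ((hasDerivAt_pow 2 t).const_mul (L / 2)).mul_const (‖d‖ ^ 2)
        exact this.congr_deriv (by rw [show (2:ℕ) - 1 = 1 from rfl]; push_cast; ring)
      have h3 := this.add h2; simp at h3; exact h3
    have h3 := h1.sub (hline t); exact h3
  have hmono : MonotoneOn f (Set.Icc (0:ℝ) 1) := by
    apply monotoneOn_of_deriv_nonneg (convex_Icc 0 1)
    · have hdiff : Differentiable ℝ f := fun t => (hderiv t).differentiableAt
      exact hdiff.continuous.continuousOn
    · exact fun t _ => ((hderiv t).differentiableAt).differentiableWithinAt
    · intro t ht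
      rw [(hderiv t).deriv]
      have ht0 : 0 ≤ t := by
        rw [interior_Icc] at ht; exact le_of_lt ht.1
      have h1 : ⟪l' x - l' (x + t • d), d⟫ ≥ -(L * t * ‖d‖ ^ 2) := by
        have habs := abs_real_inner_le_norm (l' x - l' (x + t • d)) d
        have h2 := hlip x (x + t • d)
        have h3 : ‖x - (x + t • d)‖ = t * ‖d‖ := by
          rw [show x - (x + t • d) = -(t • d) by abel, norm_neg, norm_smul,
            Real.norm_eq_abs, abs_of_nonneg ht0]
        rw [h3] at h2
        have h5 := mul_le_mul_of_nonneg_right h2 (norm_nonneg d)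
        nlinarith [neg_abs_le ⟪l' x - l' (x + t • d), d⟫]
      have h4 : ⟪l' x - l' (x + t • d), d⟫ = ⟪l' x, d⟫ - ⟪l' (x + t • d), d⟫ :=
        inner_sub_left _ _ _
      linarith
  have h01 := hmono (Set.left_mem_Icc.2 zero_le_one) (Set.right_mem_Icc.2 zero_le_one)
    zero_le_one
  simp only [hf] at h01
  have hy : x + (1:ℝ) • d = y := by rw [one_smul, hd]; abel
  have hx0 : x + (0:ℝ) • d = x := by simp
  rw [hy, hx0] at h01
  nlinarith [h01]

lemma moreauEnv_eq_of_mem_proxSet {E : Type*} [NormedAddCommGroup E] [InnerProductSpace ℝ E]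
    (g : E → EReal) (γ : ℝ) (v w : E) (hw : w ∈ proxSet g γ v) :
    moreauEnv g γ v = g w + (((1 / (2 * γ)) * ‖w - v‖ ^ 2 : ℝ) : EReal) :=
  le_antisymm (iInf_le _ w) (le_iInf hw)

lemma fbe_eq_of_mem_proxSet {E : Type*} [NormedAddCommGroup E] [InnerProductSpace ℝ E]
    (l : E → ℝ) (l' : E → E) (g : E → EReal) (γ : ℝ) (u w : E)
    (hw : w ∈ proxSet g γ (u - γ • l' u)) :
    fbe l l' g γ u =
      ((l u - (γ / 2) * ‖l' u‖ ^ 2 + (1 / (2 * γ)) * ‖w - (u - γ • l' u)‖ ^ 2 : ℝ) : EReal)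
        + g w := by
  rw [fbe, moreauEnv_eq_of_mem_proxSet g γ _ w hw, add_comm (g w), ← add_assoc,
    ← EReal.coe_add]

/-- strong local minimality transfers from the original cost to
the FBE, assuming a forward–backward selection that is Lipschitz at the
critical point. -/
theorem strong_local_min_cost_to_fbe
    {E : Type*} [NormedAddCommGroup E] [InnerProductSpace ℝ E] [FiniteDimensional ℝ E]
    (l : E → ℝ) (l' : E → E) (g : E → EReal) (L γ : ℝ)
    (hL : 0 < L) (hγ : 0 < γ)
    (hgrad : ∀ x : E, HasGradientAt l (l' x) x)
    (hlip : ∀ x y : E, ‖l' x - l' y‖ ≤ L * ‖x - y‖)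
    (hproper : ∃ x : E, g x ≠ ⊤) (hbot : ∀ x : E, g x ≠ ⊥)
    (hlsc : LowerSemicontinuous g)
    (hbdd : ∃ m : ℝ, ∀ x : E, (m : EReal) ≤ g x)
    (hγL : γ < 1 / L)
    (ustar : E) (hfix : ustar ∈ proxSet g γ (ustar - γ • l' ustar))
    (T : E → E) (hT : ∀ u : E, T u ∈ proxSet g γ (u - γ • l' u))
    (hTfix : T ustar = ustar)
    (κ δ : ℝ) (hκ : 0 ≤ κ) (hδ : 0 < δ)
    (hTlip : ∀ u : E, ‖u - ustar‖ < δ → ‖T u - ustar‖ ≤ κ * ‖u - ustar‖)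
    (c ρ : ℝ) (hc : 0 < c) (hρ : 0 < ρ)
    (hmin : ∀ u : E, ‖u - ustar‖ < ρ →
      ((l ustar : EReal) + g ustar) + ((c * ‖u - ustar‖ ^ 2 : ℝ) : EReal) ≤
        (l u : EReal) + g u) :
    ∃ c' > (0 : ℝ), ∃ ρ' > (0 : ℝ), ∀ u : E, ‖u - ustar‖ < ρ' →
      fbe l l' g γ ustar + ((c' * ‖u - ustar‖ ^ 2 : ℝ) : EReal) ≤ fbe l l' g γ u := by
  have hγL' : L * γ < 1 := by
    rw [lt_div_iff₀ hL] at hγL; linarith [hγL]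
  set σ : ℝ := 1 / (2 * γ) - L / 2 with hσdef
  have hσ : 0 < σ := by
    have h1 : L / 2 < 1 / (2 * γ) := by
      rw [div_lt_div_iff₀ (by norm_num) (by positivity)]
      nlinarith
    simp only [hσdef]; linarith
  refine ⟨min c σ / 2, by positivity, min δ (ρ / (κ + 1)), by positivity, fun u hu => ?_⟩
  set w := T u with hw
  have hk1 : (0 : ℝ) < κ + 1 := by linarith
  have hu1 : ‖u - ustar‖ < δ := lt_of_lt_of_le hu (min_le_left _ _)
  have hu2 : ‖u - ustar‖ < ρ / (κ + 1) := lt_of_lt_of_le hu (min_le_right _ _)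
  have hwnear : ‖w - ustar‖ < ρ := by
    have h6 := hTlip u hu1
    have h7 : κ * ‖u - ustar‖ ≤ κ * (ρ / (κ + 1)) :=
      mul_le_mul_of_nonneg_left hu2.le hκ
    have h8 : κ * (ρ / (κ + 1)) < ρ := by
      rw [mul_div_assoc', div_lt_iff₀ hk1]; nlinarith
    calc ‖w - ustar‖ ≤ κ * ‖u - ustar‖ := h6
      _ ≤ κ * (ρ / (κ + 1)) := h7
      _ < ρ := h8
  -- evaluate the FBE at ustar
  have hstar : fbe l l' g γ ustar = ((l ustar : ℝ) : EReal) + g ustar := by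
    rw [fbe_eq_of_mem_proxSet l l' g γ ustar ustar hfix]
    congr 1
    norm_cast
    have : ‖ustar - (ustar - γ • l' ustar)‖ = γ * ‖l' ustar‖ := by
      rw [show ustar - (ustar - γ • l' ustar) = γ • l' ustar by abel, norm_smul,
        Real.norm_eq_abs, abs_of_pos hγ]
    rw [this]
    field_simp
    ring
  set ru : ℝ := l u - (γ / 2) * ‖l' u‖ ^ 2 + (1 / (2 * γ)) * ‖w - (u - γ • l' u)‖ ^ 2
    with hrudef
  have hvalu : fbe l l' g γ u = ((ru : ℝ) : EReal) + g w :=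
    fbe_eq_of_mem_proxSet l l' g γ u w (hT u)
  -- real inequality: ru dominates l w + σ‖w − u‖²
  have hr : l w + σ * ‖w - u‖ ^ 2 ≤ ru := by
    have hexp : ‖w - (u - γ • l' u)‖ ^ 2
        = ‖w - u‖ ^ 2 + 2 * (γ * ⟪w - u, l' u⟫) + γ ^ 2 * ‖l' u‖ ^ 2 := by
      rw [show w - (u - γ • l' u) = (w - u) + γ • l' u by abel, norm_add_sq_real,
        real_inner_smul_right, norm_smul, Real.norm_eq_abs, abs_of_pos hγ, mul_pow]
    have hdes := descent_lemma l l' L hgrad hlip u w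
    have hinn : ⟪l' u, w - u⟫ = ⟪w - u, l' u⟫ := real_inner_comm _ _
    have hru : ru = l u + ⟪w - u, l' u⟫ + (1 / (2 * γ)) * ‖w - u‖ ^ 2 := by
      rw [hrudef, hexp]
      field_simp
      ring
    rw [hru]
    rw [hinn] at hdes
    simp only [hσdef]
    linarith
  have hq : min c σ / 2 * ‖u - ustar‖ ^ 2 ≤ c * ‖w - ustar‖ ^ 2 + σ * ‖w - u‖ ^ 2 := by
    have tri : ‖u - ustar‖ ≤ ‖w - u‖ + ‖w - ustar‖ := by
      calc ‖u - ustar‖ = ‖(u - w) + (w - ustar)‖ := by abel_nf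
        _ ≤ ‖u - w‖ + ‖w - ustar‖ := norm_add_le _ _
        _ = ‖w - u‖ + ‖w - ustar‖ := by rw [norm_sub_rev]
    have hq2 : ‖u - ustar‖ ^ 2 ≤ 2 * ‖w - u‖ ^ 2 + 2 * ‖w - ustar‖ ^ 2 := by
      nlinarith [sq_nonneg (‖w - u‖ - ‖w - ustar‖), norm_nonneg (u - ustar),
        norm_nonneg (w - u), norm_nonneg (w - ustar)]
    have hm1 : min c σ ≤ c := min_le_left c σ
    have hm2 : min c σ ≤ σ := min_le_right c σ
    have hm0 : (0:ℝ) < min c σ := lt_min hc hσ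
    calc min c σ / 2 * ‖u - ustar‖ ^ 2
        ≤ min c σ / 2 * (2 * ‖w - u‖ ^ 2 + 2 * ‖w - ustar‖ ^ 2) :=
          mul_le_mul_of_nonneg_left hq2 (by positivity)
      _ = min c σ * ‖w - ustar‖ ^ 2 + min c σ * ‖w - u‖ ^ 2 := by ring
      _ ≤ c * ‖w - ustar‖ ^ 2 + σ * ‖w - u‖ ^ 2 :=
          add_le_add (mul_le_mul_of_nonneg_right hm1 (sq_nonneg _))
            (mul_le_mul_of_nonneg_right hm2 (sq_nonneg _))
  rw [hstar, hvalu]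
  calc ((l ustar : ℝ) : EReal) + g ustar + ((min c σ / 2 * ‖u - ustar‖ ^ 2 : ℝ) : EReal)
      ≤ ((l ustar : ℝ) : EReal) + g ustar
          + ((c * ‖w - ustar‖ ^ 2 + σ * ‖w - u‖ ^ 2 : ℝ) : EReal) :=
        add_le_add le_rfl (EReal.coe_le_coe_iff.2 hq)
    _ = (((l ustar : ℝ) : EReal) + g ustar + ((c * ‖w - ustar‖ ^ 2 : ℝ) : EReal))
          + ((σ * ‖w - u‖ ^ 2 : ℝ) : EReal) := by rw [EReal.coe_add, ← add_assoc]
    _ ≤ (((l w : ℝ) : EReal) + g w) + ((σ * ‖w - u‖ ^ 2 : ℝ) : EReal) :=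
        add_le_add (hmin w hwnear) le_rfl
    _ = ((l w + σ * ‖w - u‖ ^ 2 : ℝ) : EReal) + g w := by
        rw [add_right_comm, ← EReal.coe_add]
    _ ≤ ((ru : ℝ) : EReal) + g w := add_le_add (EReal.coe_le_coe_iff.2 hr) le_rfl
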